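/- Let $G$ be a group, $k$ a field, and $\rho : G \to GL_2(k)$ a representation. Let $H \leq G$ be a subgroup of index 2 such that $\rho(H)$ is contained in a Borel subgroup $B$ (the upper triangular matrices after conjugation) and $\rho(H)$ contains a nontrivial unipotent element. If $\rho(H)$ is normalized by $\rho(G)$ and the unique $B$-stable line in $k^2$ is the unique line fixed by all unipotent elements of $\rho(H)$, then $\rho(G)$ stabilizes that line; in particular $\rho$ is reducible as a $G$-representation. -/

import Mathlib

/-- A nontrivial unipotent element of `GL₂`. -/
def IsNontrivialUnipotent {k : Type*} [Field k] (u : ((Fin 2 → k) →ₗ[k] (Fin 2 → k))ˣ) : Prop :=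
  (u.val - LinearMap.id) ^ 2 = 0 ∧ u ≠ 1

theorem stmt_2 (G k : Type*) [Group G] [Field k]
    (ρ : G →* ((Fin 2 → k) →ₗ[k] (Fin 2 → k))ˣ)
    (H : Subgroup G) (hindex : H.index = 2)
    (ℓ : Submodule k (Fin 2 → k)) (hℓ1 : Module.finrank k ℓ = 1)
    -- ρ(H) is contained in the Borel stabilizing the line ℓ
    (hBorel : ∀ h ∈ H, ℓ.map (ρ h).val ≤ ℓ)
    -- ρ(H) contains a nontrivial unipotent element
    (hunip : ∃ h ∈ H, IsNontrivialUnipotent (ρ h))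
    -- ρ(H) is normalized by ρ(G)
    (hnorm : ∀ g : G, ∀ h ∈ H, ∃ h' ∈ H, ρ g * ρ h * (ρ g)⁻¹ = ρ h')
    -- ℓ, the unique Borel-stable line, is the unique line fixed by all
    -- unipotent elements of ρ(H)
    (huniq : ∀ ℓ' : Submodule k (Fin 2 → k), Module.finrank k ℓ' = 1 →
      (∀ h ∈ H, IsNontrivialUnipotent (ρ h) → ℓ'.map (ρ h).val ≤ ℓ') → ℓ' = ℓ) :
    ∀ g : G, ℓ.map (ρ g).val = ℓ := by
  intro g
  apply huniq
  · have := (LinearMap.GeneralLinearGroup.toLinearEquiv (ρ g)).finrank_map_eq ℓ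
    exact this.trans hℓ1
  · intro h hH _
    obtain ⟨h', hH', heq⟩ := hnorm g⁻¹ h hH
    have key : ρ h * ρ g = ρ g * ρ h' := by
      have : (ρ g)⁻¹ * ρ h * ρ g = ρ h' := by simpa [map_inv] using heq
      rw [← this]; group
    have keyv : (ρ h).val ∘ₗ (ρ g).val = (ρ g).val ∘ₗ (ρ h').val := by
      have := congrArg Units.val key
      exact this
    rw [← Submodule.map_comp, keyv, Submodule.map_comp]
    exact Submodule.map_mono (hBorel h' hH')
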